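/- Let a ∈ ℝ and define L̂ : ℝ² → ℝ² by L̂(x, y) = (2x − y + a, x) (the case det A = 1, tr A = 2). Then for every natural number n and all (x, y) ∈ ℝ², L̂^[n](x, y) = ( (1 + n)·x − n·y + a·n·(n + 1)/2, n·x + (1 − n)·y + a·n·(n − 1)/2 ). -/
import Mathlib


/-- explicit formula for the `n`-th iterate of the affine map
`L̂(x,y) = (2x − y + a, x)` (the case `det A = 1`, `tr A = 2`). -/
theorem stmt_7 (a : ℝ)
    (L : ℝ × ℝ → ℝ × ℝ) (hL : L = fun p => (2 * p.1 - p.2 + a, p.1)) :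
    ∀ n : ℕ, ∀ x y : ℝ,
      L^[n] (x, y) =
        ((1 + (n : ℝ)) * x - (n : ℝ) * y + a * (n : ℝ) * ((n : ℝ) + 1) / 2,
         (n : ℝ) * x + (1 - (n : ℝ)) * y + a * (n : ℝ) * ((n : ℝ) - 1) / 2) := by
  intro n
  induction n with
  | zero => intro x y; simp
  | succ n ih =>
    intro x y
    rw [Function.iterate_succ_apply, show L (x, y) = (2 * x - y + a, x) by rw [hL]]
    have := ih (2 * x - y + a) x
    rw [this]
    push_cast
    exact Prod.ext (by ring) (by ring)
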